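/- Let A = M_n(ℂ) act on H = M_n(ℂ) (with the Hilbert–Schmidt inner product ⟨x,y⟩ = Tr(x*y)) by left multiplication, let J(x) := x*, and for a selfadjoint d ∈ M_n(ℂ) define D(x) := dxd. Then D satisfies the first order condition [[D,a], Jb*J⁻¹] = 0 for all a,b ∈ A if and only if d is a scalar multiple of the identity; in particular, in the canonical decomposition D_R = D, and the spectral triple (A,H,D,J) fails the first order condition whenever d is not central. -/

import Mathlib

open scoped ComplexConjugate

/-- The Hilbert space `M_n(ℂ)` with the Hilbert–Schmidt inner product
`⟨x,y⟩ = Tr(x*y)`, realized as `ℂ^{n×n}` with the standard inner product. -/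
abbrev MatH (n : ℕ) := EuclideanSpace ℂ (Fin n × Fin n)

/-- Left multiplication by the matrix `a` on `M_n(ℂ)`. -/
noncomputable def lmul (n : ℕ) (a : Matrix (Fin n) (Fin n) ℂ) : MatH n →ₗ[ℂ] MatH n where
  toFun x := WithLp.toLp 2 (fun p => ∑ j, a p.1 j * x (j, p.2))
  map_add' x y := by
    ext p
    simp [Finset.sum_add_distrib, mul_add]
  map_smul' c x := by
    ext p
    simp [Finset.mul_sum]
    try ring_nf
    try simp [mul_assoc, mul_comm, mul_left_comm]

/-- Right multiplication by the matrix `b` on `M_n(ℂ)`. -/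
noncomputable def rmul (n : ℕ) (b : Matrix (Fin n) (Fin n) ℂ) : MatH n →ₗ[ℂ] MatH n where
  toFun x := WithLp.toLp 2 (fun p => ∑ j, x (p.1, j) * b j p.2)
  map_add' x y := by
    ext p
    simp [Finset.sum_add_distrib, add_mul]
  map_smul' c x := by
    ext p
    simp [Finset.mul_sum]
    try ring_nf
    try simp [mul_assoc, mul_comm, mul_left_comm]

/-- The real structure `J(x) := x*` on `M_n(ℂ)`. -/
noncomputable def Jmat (n : ℕ) : MatH n ≃ₛₗ[starRingEnd ℂ] MatH n where
  toFun x := WithLp.toLp 2 (fun p => (starRingEnd ℂ) (x (p.2, p.1)))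
  invFun x := WithLp.toLp 2 (fun p => (starRingEnd ℂ) (x (p.2, p.1)))
  left_inv x := by ext p; simp
  right_inv x := by ext p; simp
  map_add' x y := by ext p; simp
  map_smul' c x := by ext p; simp

/-- For an antilinear isometry `J` and `ξ ∈ End(H)`, the operator `ξ° := J ξ* J⁻¹`. -/
noncomputable def sharp {n : ℕ} (J : MatH n ≃ₛₗ[starRingEnd ℂ] MatH n)
    (ξ : MatH n →ₗ[ℂ] MatH n) : MatH n →ₗ[ℂ] MatH n where
  toFun x := J (star ξ (J.symm x))
  map_add' x y := by simp
  map_smul' c x := by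
    show J (star ξ (J.symm (c • x))) = _
    rw [map_smulₛₗ, map_smul, map_smulₛₗ]; simp

/-- Conjugation `ξ ↦ J ξ J⁻¹` of an operator by the antilinear map `J`. -/
noncomputable def conjJ {n : ℕ} (J : MatH n ≃ₛₗ[starRingEnd ℂ] MatH n)
    (ξ : MatH n →ₗ[ℂ] MatH n) : MatH n →ₗ[ℂ] MatH n where
  toFun x := J (ξ (J.symm x))
  map_add' x y := by simp
  map_smul' c x := by
    show J (ξ (J.symm (c • x))) = _
    rw [map_smulₛₗ, map_smul, map_smulₛₗ]; simp

/-- The commutant of a subset of `End(H)`. -/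
def commutant {n : ℕ} (S : Set (MatH n →ₗ[ℂ] MatH n)) : Set (MatH n →ₗ[ℂ] MatH n) :=
  {η | ∀ ξ ∈ S, η * ξ = ξ * η}

/-- `Ω¹_D(A)`: the complex span of `{a[D,b] : a, b ∈ A}`. -/
noncomputable def omega1 {n : ℕ} (Aset : Set (MatH n →ₗ[ℂ] MatH n)) (D : MatH n →ₗ[ℂ] MatH n) :
    Submodule ℂ (MatH n →ₗ[ℂ] MatH n) :=
  Submodule.span ℂ {x | ∃ a ∈ Aset, ∃ b ∈ Aset, x = a * (D * b - b * D)}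

/-- `Cl_D(A)`: the complex `*`-subalgebra of `End(H)` generated by `A` and `Ω¹_D(A)`. -/
noncomputable def cliff {n : ℕ} (Aset : Set (MatH n →ₗ[ℂ] MatH n))
    (D : MatH n →ₗ[ℂ] MatH n) : StarSubalgebra ℂ (MatH n →ₗ[ℂ] MatH n) :=
  StarAlgebra.adjoin ℂ (Aset ∪ (omega1 Aset D : Set (MatH n →ₗ[ℂ] MatH n)))

/-- The algebra `A = M_n(ℂ)` acting on `H = M_n(ℂ)` by left multiplication. -/
def Amat (n : ℕ) : Set (MatH n →ₗ[ℂ] MatH n) := Set.range (lmul n)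

open Matrix

section Aux
variable {n : ℕ}

lemma lmul_apply (a : Matrix (Fin n) (Fin n) ℂ) (x : MatH n) (p : Fin n × Fin n) :
    lmul n a x p = ∑ j, a p.1 j * x (j, p.2) := rfl

lemma rmul_apply (b : Matrix (Fin n) (Fin n) ℂ) (x : MatH n) (p : Fin n × Fin n) :
    rmul n b x p = ∑ j, x (p.1, j) * b j p.2 := rfl

lemma lmul_mul (a b : Matrix (Fin n) (Fin n) ℂ) :
    lmul n (a * b) = lmul n a * lmul n b := by
  apply LinearMap.ext; intro x; ext p
  simp only [Module.End.mul_apply, lmul_apply, Matrix.mul_apply, Finset.sum_mul,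
    Finset.mul_sum, mul_assoc]
  exact Finset.sum_comm

lemma rmul_mul (a b : Matrix (Fin n) (Fin n) ℂ) :
    rmul n (a * b) = rmul n b * rmul n a := by
  apply LinearMap.ext; intro x; ext p
  simp only [Module.End.mul_apply, rmul_apply, Matrix.mul_apply, Finset.sum_mul,
    Finset.mul_sum, mul_assoc]
  exact Finset.sum_comm

lemma lmul_rmul_comm (a b : Matrix (Fin n) (Fin n) ℂ) :
    lmul n a * rmul n b = rmul n b * lmul n a := by
  apply LinearMap.ext; intro x; ext p
  simp only [Module.End.mul_apply, lmul_apply, rmul_apply, Finset.sum_mul,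
    Finset.mul_sum, mul_assoc]
  exact Finset.sum_comm

lemma lmul_sub (a b : Matrix (Fin n) (Fin n) ℂ) :
    lmul n (a - b) = lmul n a - lmul n b := by
  apply LinearMap.ext; intro x; ext p
  simp [lmul_apply, Matrix.sub_apply, sub_mul, Finset.sum_sub_distrib]

lemma rmul_sub (a b : Matrix (Fin n) (Fin n) ℂ) :
    rmul n (a - b) = rmul n a - rmul n b := by
  apply LinearMap.ext; intro x; ext p
  simp [rmul_apply, Matrix.sub_apply, mul_sub, Finset.sum_sub_distrib]

lemma star_lmul (b : Matrix (Fin n) (Fin n) ℂ) :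
    star (lmul n b) = lmul n bᴴ := by
  rw [LinearMap.star_eq_adjoint]
  symm
  rw [LinearMap.eq_adjoint_iff]
  intro x y
  simp only [lmul_apply, PiLp.inner_apply, RCLike.inner_apply, map_sum, _root_.map_mul,
    conjTranspose_apply, starRingEnd_apply, star_star, Fintype.sum_prod_type,
    Finset.sum_mul, Finset.mul_sum]
  rw [Finset.sum_comm]
  conv_rhs => rw [Finset.sum_comm]
  refine Finset.sum_congr rfl fun p2 _ => ?_
  rw [Finset.sum_comm]
  refine Finset.sum_congr rfl fun k _ => Finset.sum_congr rfl fun p1 _ => ?_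
  ring

lemma sharp_lmul (b : Matrix (Fin n) (Fin n) ℂ) :
    sharp (Jmat n) (lmul n b) = rmul n b := by
  apply LinearMap.ext; intro x; ext p
  show (Jmat n) (star (lmul n b) ((Jmat n).symm x)) p = _
  rw [star_lmul]
  show (starRingEnd ℂ) ((lmul n bᴴ ((Jmat n).symm x)) (p.2, p.1)) = _
  simp only [lmul_apply, rmul_apply, map_sum, _root_.map_mul, conjTranspose_apply,
    starRingEnd_apply, star_star]
  refine Finset.sum_congr rfl fun j _ => ?_
  show b j p.2 * star ((starRingEnd ℂ) (x (p.1, j))) = _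
  rw [starRingEnd_apply, star_star, mul_comm]

end Aux

section More
open Matrix
variable {n : ℕ}

lemma lmul_zero' : lmul n 0 = 0 := by
  apply LinearMap.ext; intro x; ext p
  simp [lmul_apply]

lemma conjJ_one' : conjJ (Jmat n) 1 = 1 := by
  apply LinearMap.ext; intro x
  show (Jmat n) ((1 : MatH n →ₗ[ℂ] MatH n) ((Jmat n).symm x)) = (1 : MatH n →ₗ[ℂ] MatH n) x
  rw [Module.End.one_apply, Module.End.one_apply, LinearEquiv.apply_symm_apply]

lemma comm_eq (d a : Matrix (Fin n) (Fin n) ℂ) :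
    lmul n d * rmul n d * lmul n a - lmul n a * (lmul n d * rmul n d)
      = lmul n (d * a - a * d) * rmul n d := by
  have h1 : lmul n d * rmul n d * lmul n a = lmul n (d * a) * rmul n d := by
    rw [mul_assoc, ← lmul_rmul_comm, ← mul_assoc, ← lmul_mul]
  have h2 : lmul n a * (lmul n d * rmul n d) = lmul n (a * d) * rmul n d := by
    rw [← mul_assoc, ← lmul_mul]
  rw [h1, h2, ← sub_mul, ← lmul_sub]

lemma eval_single (c m : Matrix (Fin n) (Fin n) ℂ) (j₀ i₀ p q : Fin n) :
    (lmul n c * rmul n m) (EuclideanSpace.single ((j₀, i₀) : Fin n × Fin n) (1:ℂ)) (p, q)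
      = c p j₀ * m i₀ q := by
  simp [Module.End.mul_apply, lmul_apply, rmul_apply, EuclideanSpace.single_apply,
    Prod.mk.injEq, ite_and, Finset.sum_ite_eq', mul_ite]

end More

/-- For `A = M_n(ℂ)` acting by left multiplication on `H = M_n(ℂ)`,
`J(x) = x*` and `D(x) = dxd` with `d` selfadjoint: `D` satisfies the first order
condition iff `d` is a scalar multiple of the identity; in the canonical decomposition
(with `N = 1`, `P₁ = 1`) one has `D_R = D`; in particular the triple fails the first
order condition whenever `d` is not central. -/
theorem matrix_triple_product_firstOrder (n : ℕ) (d : Matrix (Fin n) (Fin n) ℂ)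
    (hd : IsSelfAdjoint d) :
    ((∀ a ∈ Amat n, ∀ b ∈ Amat n,
        (lmul n d * rmul n d * a - a * (lmul n d * rmul n d)) * sharp (Jmat n) b
          = sharp (Jmat n) b
              * (lmul n d * rmul n d * a - a * (lmul n d * rmul n d))) ↔
      ∃ c : ℂ, d = c • (1 : Matrix (Fin n) (Fin n) ℂ)) ∧
    ((∑ _i : Fin 1, ∑ _j : Fin 1,
        (1 : MatH n →ₗ[ℂ] MatH n) * conjJ (Jmat n) 1 * (lmul n d * rmul n d)
          * ((1 : MatH n →ₗ[ℂ] MatH n) * conjJ (Jmat n) 1))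
        = lmul n d * rmul n d) ∧
    ((¬ ∃ c : ℂ, d = c • (1 : Matrix (Fin n) (Fin n) ℂ)) →
      ¬ ∀ a ∈ Amat n, ∀ b ∈ Amat n,
        (lmul n d * rmul n d * a - a * (lmul n d * rmul n d)) * sharp (Jmat n) b
          = sharp (Jmat n) b
              * (lmul n d * rmul n d * a - a * (lmul n d * rmul n d))) := by
  have main : (∀ a ∈ Amat n, ∀ b ∈ Amat n,
        (lmul n d * rmul n d * a - a * (lmul n d * rmul n d)) * sharp (Jmat n) b
          = sharp (Jmat n) b
              * (lmul n d * rmul n d * a - a * (lmul n d * rmul n d))) ↔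
      ∃ c : ℂ, d = c • (1 : Matrix (Fin n) (Fin n) ℂ) := by
    constructor
    · intro h
      -- first show d commutes with every matrix
      have key : ∀ e : Matrix (Fin n) (Fin n) ℂ, d * e = e * d := by
        intro e
        have he := h (lmul n e) ⟨e, rfl⟩ (lmul n e) ⟨e, rfl⟩
        rw [comm_eq, sharp_lmul] at he
        set c := d * e - e * d with hc
        -- he : (lmul c * rmul d) * rmul e = rmul e * (lmul c * rmul d)
        have hL : lmul n c * rmul n d * rmul n e = lmul n c * rmul n (e * d) := by
          rw [mul_assoc, ← rmul_mul]
        have hR : rmul n e * (lmul n c * rmul n d) = lmul n c * rmul n (d * e) := by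
          rw [← mul_assoc, ← lmul_rmul_comm, mul_assoc, ← rmul_mul]
        rw [hL, hR] at he
        have hz : lmul n c * rmul n (e * d - d * e) = 0 := by
          rw [rmul_sub, mul_sub, he, sub_self]
        have hent : ∀ i j : Fin n, c i j * (e * d - d * e) i j = 0 := by
          intro i j
          have := congrFun (congrArg WithLp.ofLp (LinearMap.ext_iff.mp hz
            (EuclideanSpace.single ((j, i) : Fin n × Fin n) (1:ℂ)))) (i, j)
          rwa [eval_single] at this
        have hc0 : c = 0 := by
          ext i j
          have := hent i j
          have h2 : (e * d - d * e) i j = -(c i j) := by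
            simp [hc, Matrix.sub_apply]
          rw [h2, mul_neg, neg_eq_zero, mul_self_eq_zero] at this
          simpa using this
        have := sub_eq_zero.mp hc0
        exact this
      -- hence d is scalar
      have hmem : d ∈ Set.range (Matrix.scalar (Fin n)) := by
        apply Matrix.mem_range_scalar_of_commute_single
        intro i j _
        exact (key _).symm
      obtain ⟨r, hr⟩ := hmem
      refine ⟨r, ?_⟩
      rw [← hr]
      ext i j
      simp [Matrix.scalar_apply, Matrix.diagonal_apply, Matrix.one_apply]
    · rintro ⟨c, rfl⟩ a ha b hb
      obtain ⟨a₀, rfl⟩ := ha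
      have hzero : lmul n (c • (1 : Matrix (Fin n) (Fin n) ℂ)) * rmul n (c • 1) * lmul n a₀
          - lmul n a₀ * (lmul n (c • (1 : Matrix (Fin n) (Fin n) ℂ)) * rmul n (c • 1)) = 0 := by
        rw [comm_eq]
        have : (c • (1 : Matrix (Fin n) (Fin n) ℂ)) * a₀ - a₀ * (c • 1) = 0 := by
          simp [smul_mul_assoc, mul_smul_comm]
        rw [this, lmul_zero', zero_mul]
      rw [hzero, zero_mul, mul_zero]
  refine ⟨main, ?_, fun hne hcond => hne (main.mp hcond)⟩
  simp [conjJ_one']
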